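/- Uhlmann's theorem: for density operators ρ^A and σ^A and any fixed purification |φ⟩ on A⊗B of σ^A, the fidelity satisfies F(ρ,σ) = max over purifications |ψ⟩ on A⊗B of ρ^A of |⟨ψ|φ⟩|², provided dim B ≥ dim A. -/

import Mathlib

open scoped Matrix Kronecker ComplexOrder

noncomputable section

/-- The old `Matrix.PosSemidef.sqrt` (removed from Mathlib), with its old definition. -/
noncomputable def posSemidefSqrt {n : Type*} [Fintype n] [DecidableEq n] {A : Matrix n n ℂ}
    (hA : A.PosSemidef) : Matrix n n ℂ :=
  (hA.1.eigenvectorUnitary : Matrix n n ℂ) * Matrix.diagonal ((↑) ∘ Real.sqrt ∘ hA.1.eigenvalues) *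
    (star (hA.1.eigenvectorUnitary : Matrix n n ℂ))

noncomputable def traceNorm {n : Type*} [Fintype n] [DecidableEq n] (A : Matrix n n ℂ) : ℝ :=
  ((posSemidefSqrt (Matrix.posSemidef_conjTranspose_mul_self A)).trace).re

noncomputable def vnEntropy {n : Type*} [Fintype n] [DecidableEq n] (ρ : Matrix n n ℂ) : ℝ :=
  if h : ρ.IsHermitian then -∑ i, (h.eigenvalues i * Real.log (h.eigenvalues i)) else 0

def ptraceL {a b : Type*} [Fintype a] (M : Matrix (a × b) (a × b) ℂ) : Matrix b b ℂ :=
  Matrix.of fun i j => ∑ k : a, M (k, i) (k, j)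

def ptraceR {a b : Type*} [Fintype b] (M : Matrix (a × b) (a × b) ℂ) : Matrix a a ℂ :=
  Matrix.of fun i j => ∑ k : b, M (i, k) (j, k)

def ptrace3M {a b c : Type*} [Fintype b] (M : Matrix (a × b × c) (a × b × c) ℂ) :
    Matrix (a × c) (a × c) ℂ :=
  Matrix.of fun i j => ∑ k : b, M (i.1, k, i.2) (j.1, k, j.2)

open scoped Classical in
noncomputable def msqrt {n : Type*} [Fintype n] [DecidableEq n] (A : Matrix n n ℂ) :
    Matrix n n ℂ :=
  if h : A.PosSemidef then posSemidefSqrt h else 0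

noncomputable def fidelity {n : Type*} [Fintype n] [DecidableEq n] (ρ σ : Matrix n n ℂ) : ℝ :=
  (((msqrt (msqrt σ * ρ * msqrt σ)).trace).re) ^ 2

def outer {n : Type*} (v : n → ℂ) : Matrix n n ℂ :=
  Matrix.of fun i j => v i * (starRingEnd ℂ) (v j)

def krausApply {ι a b : Type*} [Fintype ι] [Fintype a]
    (K : ι → Matrix b a ℂ) (ρ : Matrix a a ℂ) : Matrix b b ℂ :=
  ∑ i, K i * ρ * (K i)ᴴ

lemma msqrt_eq {n : Type*} [Fintype n] [DecidableEq n] {A : Matrix n n ℂ} (h : A.PosSemidef) :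
    msqrt A = posSemidefSqrt h := by rw [msqrt, dif_pos h]

lemma posSemidefSqrt_posSemidef {n : Type*} [Fintype n] [DecidableEq n] {A : Matrix n n ℂ}
    (hA : A.PosSemidef) : (posSemidefSqrt hA).PosSemidef := by
  unfold posSemidefSqrt
  have hD : (Matrix.diagonal ((↑) ∘ Real.sqrt ∘ hA.1.eigenvalues : n → ℂ)).PosSemidef :=
    Matrix.posSemidef_diagonal_iff.mpr fun i => Complex.zero_le_real.mpr (Real.sqrt_nonneg _)
  have := hD.mul_mul_conjTranspose_same (hA.1.eigenvectorUnitary : Matrix n n ℂ)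
  simpa [Matrix.star_eq_conjTranspose] using this

lemma posSemidefSqrt_mul_self {n : Type*} [Fintype n] [DecidableEq n] {A : Matrix n n ℂ}
    (hA : A.PosSemidef) : posSemidefSqrt hA * posSemidefSqrt hA = A := by
  unfold posSemidefSqrt
  set U : Matrix n n ℂ := (hA.1.eigenvectorUnitary : Matrix n n ℂ) with hUdef
  have hU : star U * U = 1 := Matrix.mem_unitaryGroup_iff'.mp hA.1.eigenvectorUnitary.2
  have hDD : Matrix.diagonal ((↑) ∘ Real.sqrt ∘ hA.1.eigenvalues : n → ℂ) *
      Matrix.diagonal ((↑) ∘ Real.sqrt ∘ hA.1.eigenvalues : n → ℂ)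
      = Matrix.diagonal ((↑) ∘ hA.1.eigenvalues : n → ℂ) := by
    rw [Matrix.diagonal_mul_diagonal]
    congr 1
    funext i
    simp only [Function.comp_apply]
    rw [← Complex.ofReal_mul, Real.mul_self_sqrt (hA.eigenvalues_nonneg i)]
  simp only [Matrix.mul_assoc]
  rw [← Matrix.mul_assoc (star U) U, hU, Matrix.one_mul, ← Matrix.mul_assoc _ _ (star U), hDD,
    ← Matrix.mul_assoc]
  exact hA.1.spectral_theorem.symm

open Matrix in
lemma row_eq_zero_of_diag_zero {a b : Type*} [Fintype b] (G : Matrix a b ℂ) (i : a)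
    (h : (G * Gᴴ) i i = 0) (k : b) : G i k = 0 := by
  have h2 : ∑ k, (Complex.normSq (G i k) : ℂ) = 0 := by
    simpa [Matrix.mul_apply, Matrix.conjTranspose_apply, Complex.mul_conj] using h
  have h3 : ∑ k, Complex.normSq (G i k) = 0 := by exact_mod_cast h2
  have h4 := (Finset.sum_eq_zero_iff_of_nonneg
    (fun k _ => Complex.normSq_nonneg (G i k))).mp h3 k (Finset.mem_univ k)
  exact Complex.normSq_eq_zero.mp h4

open Matrix in
lemma coisometry_factor {a b : Type*} [Fintype a] [DecidableEq a] [Fintype b] [DecidableEq b]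
    (Φ : Matrix a b ℂ) (hab : Fintype.card a ≤ Fintype.card b) :
    ∃ W : Matrix a b ℂ, W * Wᴴ = 1 ∧ msqrt (Φ * Φᴴ) * W = Φ := by
  classical
  have hσ : (Φ * Φᴴ).PosSemidef := posSemidef_self_mul_conjTranspose Φ
  set hH := hσ.1 with hHdef
  set d : a → ℝ := hH.eigenvalues with hd
  set V : Matrix a a ℂ := (hH.eigenvectorUnitary : Matrix a a ℂ) with hV
  have hVsV : Vᴴ * V = 1 := by
    simpa [Matrix.star_eq_conjTranspose, hV] using
      (Matrix.mem_unitaryGroup_iff'.mp hH.eigenvectorUnitary.2)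
  have hVVs : V * Vᴴ = 1 := by
    simpa [Matrix.star_eq_conjTranspose, hV] using
      (Matrix.mem_unitaryGroup_iff.mp hH.eigenvectorUnitary.2)
  have hspec : Φ * Φᴴ = V * Matrix.diagonal (fun i => (d i : ℂ)) * Vᴴ := by
    exact hH.spectral_theorem
  set G : Matrix a b ℂ := Vᴴ * Φ with hG
  have hΦG : V * G = Φ := by rw [hG, ← Matrix.mul_assoc, hVVs, Matrix.one_mul]
  have hGG : G * Gᴴ = Matrix.diagonal (fun i => (d i : ℂ)) := by
    rw [hG, Matrix.conjTranspose_mul, Matrix.conjTranspose_conjTranspose]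
    calc Vᴴ * Φ * (Φᴴ * V) = Vᴴ * (Φ * Φᴴ) * V := by
          rw [Matrix.mul_assoc, Matrix.mul_assoc, Matrix.mul_assoc]
      _ = Matrix.diagonal (fun i => (d i : ℂ)) := by
          rw [hspec]
          rw [show V * Matrix.diagonal (fun i => (d i : ℂ)) * Vᴴ
              = V * (Matrix.diagonal (fun i => (d i : ℂ)) * Vᴴ) from Matrix.mul_assoc _ _ _]
          rw [← Matrix.mul_assoc Vᴴ V _, hVsV, Matrix.one_mul, Matrix.mul_assoc, hVsV,
            Matrix.mul_one]
  -- inner products of rows of G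
  set g : a → EuclideanSpace ℂ b := fun i => WithLp.toLp 2 (G i) with hg
  have hinner : ∀ i₁ i₂ : a, (inner (𝕜 := ℂ) (g i₁) (g i₂))
      = Matrix.diagonal (fun i => (d i : ℂ)) i₂ i₁ := by
    intro i₁ i₂
    rw [← hGG, PiLp.inner_apply]
    simp [RCLike.inner_apply, Matrix.mul_apply, Matrix.conjTranspose_apply, mul_comm, hg]
  set e : a ↪ b := (Function.Embedding.nonempty_of_card_le hab).some with he
  set s : Set b := e '' {i : a | d i ≠ 0} with hs
  set v : b → EuclideanSpace ℂ b := fun j =>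
    if h : ∃ i : a, d i ≠ 0 ∧ e i = j
    then (((Real.sqrt (d h.choose))⁻¹ : ℝ) : ℂ) • g h.choose else 0 with hv'
  have hv_eq : ∀ i : a, d i ≠ 0 →
      v (e i) = (((Real.sqrt (d i))⁻¹ : ℝ) : ℂ) • g i := by
    intro i hi
    have hex : ∃ i' : a, d i' ≠ 0 ∧ e i' = e i := ⟨i, hi, rfl⟩
    have hch : hex.choose = i := e.injective hex.choose_spec.2
    simp only [hv', dif_pos hex, hch]
  have hdpos : ∀ i : a, d i ≠ 0 → 0 < d i := fun i hi =>
    lt_of_le_of_ne (hσ.eigenvalues_nonneg i) (Ne.symm hi)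
  have horth : Orthonormal ℂ (s.restrict v) := by
    rw [orthonormal_iff_ite]
    rintro ⟨j₁, hj₁⟩ ⟨j₂, hj₂⟩
    obtain ⟨i₁, hi₁, rfl⟩ := hj₁
    obtain ⟨i₂, hi₂, rfl⟩ := hj₂
    show inner ℂ (v (e i₁)) (v (e i₂)) = _
    rw [hv_eq i₁ hi₁, hv_eq i₂ hi₂, inner_smul_left, inner_smul_right, hinner,
      Matrix.diagonal_apply]
    by_cases hii : i₂ = i₁
    · subst hii
      have hsq : Real.sqrt (d i₂) ≠ 0 := Real.sqrt_ne_zero'.mpr (hdpos i₂ hi₂)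
      have hmul : Real.sqrt (d i₂) * Real.sqrt (d i₂) = d i₂ :=
        Real.mul_self_sqrt (hdpos i₂ hi₂).le
      have h1 : (Real.sqrt (d i₂))⁻¹ * ((Real.sqrt (d i₂))⁻¹ * d i₂) = 1 := by
        rw [← mul_assoc, ← mul_inv, hmul, inv_mul_cancel₀ (hdpos i₂ hi₂).ne']
      simp only [if_pos rfl, Subtype.mk_eq_mk, EmbeddingLike.apply_eq_iff_eq, if_true,
        Complex.conj_ofReal]
      rw [show ((((Real.sqrt (d i₂))⁻¹ : ℝ) : ℂ) * ((((Real.sqrt (d i₂))⁻¹ : ℝ) : ℂ) * (d i₂ : ℂ)))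
        = ((((Real.sqrt (d i₂))⁻¹ * ((Real.sqrt (d i₂))⁻¹ * d i₂) : ℝ)) : ℂ) by push_cast; ring]
      rw [h1]; norm_num
    · rw [if_neg hii]
      have : (⟨e i₁, ⟨i₁, hi₁, rfl⟩⟩ : s) ≠ ⟨e i₂, ⟨i₂, hi₂, rfl⟩⟩ := by
        intro h
        exact hii (e.injective (congrArg Subtype.val h)).symm
      rw [if_neg this]
      simp
  obtain ⟨B, hB⟩ := horth.exists_orthonormalBasis_extension_of_card_eq
    (finrank_euclideanSpace (𝕜 := ℂ) (ι := b))
  set X : Matrix a b ℂ := Matrix.of (fun i k => B (e i) k) with hX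
  have hXB : ∀ i : a, d i ≠ 0 → ∀ k, X i k
      = (((Real.sqrt (d i))⁻¹ : ℝ) : ℂ) * G i k := by
    intro i hi k
    have : B (e i) = v (e i) := hB (e i) ⟨i, hi, rfl⟩
    rw [hX]
    simp only [Matrix.of_apply, this, hv_eq i hi]
    rfl
  have hXX : X * Xᴴ = 1 := by
    ext i j
    have hbij := orthonormal_iff_ite.mp B.orthonormal (e j) (e i)
    rw [PiLp.inner_apply] at hbij
    simp only [RCLike.inner_apply] at hbij
    simp only [Matrix.mul_apply, Matrix.conjTranspose_apply, hX, Matrix.of_apply,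
      Matrix.one_apply]
    calc ∑ k, B (e i) k * (starRingEnd ℂ) (B (e j) k)
        = ∑ k, (starRingEnd ℂ) (B (e j) k) * B (e i) k :=
          Finset.sum_congr rfl fun k _ => mul_comm _ _
      _ = if i = j then 1 else 0 := by
          rw [show ∑ k, (starRingEnd ℂ) (B (e j) k) * B (e i) k
              = ∑ k, B (e i) k * (starRingEnd ℂ) (B (e j) k) from
            Finset.sum_congr rfl fun k _ => mul_comm _ _, hbij]
          by_cases h : i = j
          · subst h; simp
          · rw [if_neg (fun hh => h (e.injective hh).symm), if_neg h]
  have hsqrt : msqrt (Φ * Φᴴ) = V * Matrix.diagonal (fun i => ((Real.sqrt (d i) : ℝ) : ℂ)) * Vᴴ := by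
    rw [msqrt_eq hσ]
    rfl
  have hDX : Matrix.diagonal (fun i => ((Real.sqrt (d i) : ℝ) : ℂ)) * X = G := by
    ext i k
    rw [Matrix.diagonal_mul]
    by_cases hi : d i ≠ 0
    · rw [hXB i hi k, ← mul_assoc, ← Complex.ofReal_mul,
        mul_inv_cancel₀ (Real.sqrt_ne_zero'.mpr (hdpos i hi)), Complex.ofReal_one, one_mul]
    · push_neg at hi
      have hGik : G i k = 0 := by
        apply row_eq_zero_of_diag_zero G i
        rw [hGG, Matrix.diagonal_apply_eq, hi, Complex.ofReal_zero]
      rw [hGik, hi]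
      simp
  refine ⟨V * X, ?_, ?_⟩
  · rw [Matrix.conjTranspose_mul]
    simp only [Matrix.mul_assoc]
    rw [← Matrix.mul_assoc X Xᴴ Vᴴ, hXX, Matrix.one_mul, hVVs]
  · rw [hsqrt]
    simp only [Matrix.mul_assoc]
    rw [← Matrix.mul_assoc Vᴴ V X, hVsV, Matrix.one_mul, hDX, hΦG]

lemma msqrt_herm {n : Type*} [Fintype n] [DecidableEq n] (A : Matrix n n ℂ) :
    (msqrt A)ᴴ = msqrt A := by
  by_cases h : A.PosSemidef
  · rw [msqrt_eq h]; exact (posSemidefSqrt_posSemidef h).1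
  · rw [msqrt, dif_neg h]; simp

lemma msqrt_mul_self {n : Type*} [Fintype n] [DecidableEq n] {A : Matrix n n ℂ}
    (h : A.PosSemidef) : msqrt A * msqrt A = A := by
  rw [msqrt_eq h]; exact posSemidefSqrt_mul_self h

lemma msqrt_posSemidef {n : Type*} [Fintype n] [DecidableEq n] {A : Matrix n n ℂ}
    (h : A.PosSemidef) : (msqrt A).PosSemidef := by
  rw [msqrt_eq h]; exact posSemidefSqrt_posSemidef h

open Matrix in
lemma polar_decomp {n : Type*} [Fintype n] [DecidableEq n] (M : Matrix n n ℂ) :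
    ∃ U : Matrix n n ℂ, U * Uᴴ = 1 ∧ Uᴴ * U = 1 ∧ M = U * msqrt (Mᴴ * M) := by
  obtain ⟨W, hW1, hW2⟩ := coisometry_factor Mᴴ le_rfl
  rw [Matrix.conjTranspose_conjTranspose] at hW2
  refine ⟨Wᴴ, ?_, ?_, ?_⟩
  · rw [Matrix.conjTranspose_conjTranspose]
    exact mul_eq_one_comm.mp hW1
  · rw [Matrix.conjTranspose_conjTranspose]; exact hW1
  · have h2 := congrArg Matrix.conjTranspose hW2
    rw [Matrix.conjTranspose_mul, msqrt_herm, Matrix.conjTranspose_conjTranspose] at h2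
    exact h2.symm

def toMat {a b : Type*} (ψ : a × b → ℂ) : Matrix a b ℂ := Matrix.of fun i j => ψ (i, j)

open Matrix in
lemma ptraceR_outer_eq {a b : Type*} [Fintype b] (ψ : a × b → ℂ) :
    ptraceR (outer ψ) = toMat ψ * (toMat ψ)ᴴ := by
  ext i j
  simp [ptraceR, outer, toMat, Matrix.mul_apply, Matrix.conjTranspose_apply]

open Matrix in
lemma trace_conj_mul {a b : Type*} [Fintype a] [Fintype b] (ψ φ : a × b → ℂ) :
    ((toMat ψ)ᴴ * toMat φ).trace = ∑ u, (starRingEnd ℂ) (ψ u) * φ u := by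
  rw [Matrix.trace, Fintype.sum_prod_type]
  rw [Finset.sum_comm]
  simp [Matrix.diag, Matrix.mul_apply, toMat, Matrix.conjTranspose_apply]

open Matrix in
lemma trace_self_eq {a b : Type*} [Fintype a] [Fintype b] (ψ : a × b → ℂ) :
    (toMat ψ * (toMat ψ)ᴴ).trace = ((∑ u, Complex.normSq (ψ u) : ℝ) : ℂ) := by
  rw [Matrix.trace, Fintype.sum_prod_type]
  push_cast
  simp [Matrix.diag, Matrix.mul_apply, toMat, Matrix.conjTranspose_apply, Complex.mul_conj]

lemma cs_abs {ι : Type*} [Fintype ι] (x y : ι → ℂ) :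
    ‖∑ i, (starRingEnd ℂ) (x i) * y i‖ ^ 2 ≤
      (∑ i, Complex.normSq (x i)) * (∑ i, Complex.normSq (y i)) := by
  have h := norm_inner_le_norm (𝕜 := ℂ) (WithLp.toLp 2 x : EuclideanSpace ℂ ι)
    (WithLp.toLp 2 y : EuclideanSpace ℂ ι)
  have hi : inner (𝕜 := ℂ) (WithLp.toLp 2 x : EuclideanSpace ℂ ι) (WithLp.toLp 2 y : EuclideanSpace ℂ ι)
      = ∑ i, (starRingEnd ℂ) (x i) * y i := by
    rw [PiLp.inner_apply]; simp [RCLike.inner_apply, mul_comm]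
  have hx : ‖(WithLp.toLp 2 x : EuclideanSpace ℂ ι)‖ ^ 2 = ∑ i, Complex.normSq (x i) := by
    rw [EuclideanSpace.norm_eq, Real.sq_sqrt (by positivity)]
    simp [Complex.normSq_eq_norm_sq]
  have hy : ‖(WithLp.toLp 2 y : EuclideanSpace ℂ ι)‖ ^ 2 = ∑ i, Complex.normSq (y i) := by
    rw [EuclideanSpace.norm_eq, Real.sq_sqrt (by positivity)]
    simp [Complex.normSq_eq_norm_sq]
  calc ‖∑ i, (starRingEnd ℂ) (x i) * y i‖ ^ 2
      = ‖inner (𝕜 := ℂ) (WithLp.toLp 2 x : EuclideanSpace ℂ ι) (WithLp.toLp 2 y : EuclideanSpace ℂ ι)‖ ^ 2 := by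
        rw [hi]
    _ ≤ (‖(WithLp.toLp 2 x : EuclideanSpace ℂ ι)‖ * ‖(WithLp.toLp 2 y : EuclideanSpace ℂ ι)‖) ^ 2 := by
        have h0 : (0:ℝ) ≤ ‖inner (𝕜 := ℂ) (WithLp.toLp 2 x : EuclideanSpace ℂ ι)
          (WithLp.toLp 2 y : EuclideanSpace ℂ ι)‖ := norm_nonneg _
        exact pow_le_pow_left₀ h0 h 2
    _ = _ := by rw [mul_pow, hx, hy]

open Matrix in
lemma cs_mat {a b : Type*} [Fintype a] [Fintype b] (A B : Matrix a b ℂ) :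
    ‖(Aᴴ * B).trace‖ ^ 2 ≤ ((A * Aᴴ).trace).re * ((B * Bᴴ).trace).re := by
  have hA : toMat (fun u : a × b => A u.1 u.2) = A := by ext i j; rfl
  have hB : toMat (fun u : a × b => B u.1 u.2) = B := by ext i j; rfl
  have h1 := trace_conj_mul (fun u : a × b => A u.1 u.2) (fun u : a × b => B u.1 u.2)
  have h2 := trace_self_eq (fun u : a × b => A u.1 u.2)
  have h3 := trace_self_eq (fun u : a × b => B u.1 u.2)
  rw [hA] at h1 h2
  rw [hB] at h1 h3
  rw [h1]
  rw [show ((A * Aᴴ).trace).re = ∑ u : a × b, Complex.normSq (A u.1 u.2) by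
    rw [h2, Complex.ofReal_re]]
  rw [show ((B * Bᴴ).trace).re = ∑ u : a × b, Complex.normSq (B u.1 u.2) by
    rw [h3, Complex.ofReal_re]]
  exact cs_abs _ _

open Matrix in
lemma trace_psd_real {n : Type*} [Fintype n] [DecidableEq n] {T : Matrix n n ℂ}
    (hT : T.PosSemidef) : T.trace = ((T.trace.re : ℝ) : ℂ) := by
  have h := congrArg Matrix.trace hT.1
  rw [Matrix.trace_conjTranspose] at h
  exact (Complex.conj_eq_iff_re.mp h).symm

theorem uhlmann {a b : Type*} [Fintype a] [DecidableEq a] [Fintype b] [DecidableEq b]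
    (ρ σ : Matrix a a ℂ) (hρ : ρ.PosSemidef) (hρ1 : ρ.trace = 1)
    (hσ : σ.PosSemidef) (hσ1 : σ.trace = 1)
    (hdim : Fintype.card a ≤ Fintype.card b)
    (φ : a × b → ℂ) (hφ : ∑ u, Complex.normSq (φ u) = 1) (hφpur : ptraceR (outer φ) = σ) :
    IsGreatest {r : ℝ | ∃ ψ : a × b → ℂ,
        (∑ u, Complex.normSq (ψ u)) = 1 ∧ ptraceR (outer ψ) = ρ ∧
        r = (‖∑ u, (starRingEnd ℂ) (ψ u) * φ u‖)^2}
      (fidelity ρ σ) := by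
  classical
  set Φ : Matrix a b ℂ := toMat φ with hΦdef
  have hΦΦ : Φ * Φᴴ = σ := by rw [← ptraceR_outer_eq]; exact hφpur
  obtain ⟨W, hW, hWΦ⟩ := coisometry_factor Φ hdim
  rw [hΦΦ] at hWΦ
  set M : Matrix a a ℂ := msqrt ρ * msqrt σ with hMdef
  have hMM : Mᴴ * M = msqrt σ * ρ * msqrt σ := by
    rw [hMdef, Matrix.conjTranspose_mul, msqrt_herm, msqrt_herm]
    rw [show msqrt σ * msqrt ρ * (msqrt ρ * msqrt σ)
        = msqrt σ * (msqrt ρ * msqrt ρ) * msqrt σ by simp only [Matrix.mul_assoc]]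
    rw [msqrt_mul_self hρ]
  have hTpsd : (msqrt σ * ρ * msqrt σ).PosSemidef := by
    have h := hρ.mul_mul_conjTranspose_same (msqrt σ)
    rwa [msqrt_herm] at h
  set T : Matrix a a ℂ := msqrt (msqrt σ * ρ * msqrt σ) with hTdef
  obtain ⟨U, hUU', hU'U, hMpolar⟩ := polar_decomp M
  rw [hMM] at hMpolar
  have hTT : msqrt (msqrt σ * ρ * msqrt σ) = T := rfl
  rw [hTT] at hMpolar
  have htr_real : T.trace = ((T.trace.re : ℝ) : ℂ) :=
    trace_psd_real (msqrt_posSemidef hTpsd)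
  have hfid : fidelity ρ σ = (T.trace.re) ^ 2 := rfl
  set S : Matrix a a ℂ := msqrt T with hSdef
  have hSS : S * S = T := msqrt_mul_self (msqrt_posSemidef hTpsd)
  have hSh : Sᴴ = S := msqrt_herm T
  constructor
  · -- membership: the optimal purification
    set Ψ : Matrix a b ℂ := msqrt ρ * (U * W) with hΨdef
    have hΨΨ : Ψ * Ψᴴ = ρ := by
      rw [hΨdef]
      simp only [Matrix.conjTranspose_mul, msqrt_herm, Matrix.mul_assoc]
      rw [← Matrix.mul_assoc W Wᴴ, hW, Matrix.one_mul,
        ← Matrix.mul_assoc U Uᴴ, hUU', Matrix.one_mul, msqrt_mul_self hρ]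
    refine ⟨fun u => Ψ u.1 u.2, ?_, ?_, ?_⟩
    · have h := trace_self_eq (fun u => Ψ u.1 u.2)
      have htm : toMat (fun u => Ψ u.1 u.2) = Ψ := by ext i j; rfl
      rw [htm, hΨΨ, hρ1] at h
      exact_mod_cast h.symm
    · have htm : toMat (fun u => Ψ u.1 u.2) = Ψ := by ext i j; rfl
      rw [ptraceR_outer_eq, htm, hΨΨ]
    · have htm : toMat (fun u => Ψ u.1 u.2) = Ψ := by ext i j; rfl
      have hsum : ∑ u, (starRingEnd ℂ) (Ψ u.1 u.2) * φ u = (Ψᴴ * Φ).trace := by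
        rw [← trace_conj_mul, htm]
      have htrT : (Ψᴴ * Φ).trace = T.trace := by
        have hmat : Ψᴴ * Φ = Wᴴ * (T * W) := by
          rw [hΨdef, ← hWΦ]
          simp only [Matrix.conjTranspose_mul, msqrt_herm, Matrix.mul_assoc]
          rw [← Matrix.mul_assoc (msqrt ρ) (msqrt σ) W, ← hMdef, hMpolar]
          simp only [Matrix.mul_assoc]
          rw [← Matrix.mul_assoc Uᴴ U, hU'U, Matrix.one_mul]
        rw [hmat, Matrix.trace_mul_comm, Matrix.mul_assoc, hW, Matrix.mul_one]
      rw [hsum, htrT, hfid, htr_real]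
      rw [Complex.ofReal_re, Complex.norm_real, Real.norm_eq_abs, sq_abs]
  · -- upper bound
    rintro r ⟨ψ, hψnorm, hψpur, rfl⟩
    set Ψ : Matrix a b ℂ := toMat ψ with hΨdef
    have hΨΨ : Ψ * Ψᴴ = ρ := by rw [← ptraceR_outer_eq]; exact hψpur
    obtain ⟨V₀, hV₀, hV₀Ψ⟩ := coisometry_factor Ψ hdim
    rw [hΨΨ] at hV₀Ψ
    set A : Matrix a b ℂ := S * (Uᴴ * V₀) with hAdef
    set B : Matrix a b ℂ := S * W with hBdef
    have hAB : Aᴴ * B = Ψᴴ * Φ := by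
      rw [hAdef, hBdef, ← hV₀Ψ, ← hWΦ]
      simp only [Matrix.conjTranspose_mul, Matrix.conjTranspose_conjTranspose, hSh,
        msqrt_herm, Matrix.mul_assoc]
      rw [← Matrix.mul_assoc S S, hSS]
      rw [← Matrix.mul_assoc (msqrt ρ) (msqrt σ) W, ← hMdef, hMpolar]
      simp only [Matrix.mul_assoc]
    have hAA : A * Aᴴ = T := by
      rw [hAdef]
      simp only [Matrix.conjTranspose_mul, Matrix.conjTranspose_conjTranspose, hSh,
        Matrix.mul_assoc]
      rw [← Matrix.mul_assoc V₀ V₀ᴴ, hV₀, Matrix.one_mul,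
        ← Matrix.mul_assoc Uᴴ U, hU'U, Matrix.one_mul, hSS]
    have hBB : B * Bᴴ = T := by
      rw [hBdef]
      simp only [Matrix.conjTranspose_mul, hSh, Matrix.mul_assoc]
      rw [← Matrix.mul_assoc W Wᴴ, hW, Matrix.one_mul, hSS]
    have hcs := cs_mat A B
    rw [hAB, hAA, hBB] at hcs
    have hsum : ∑ u, (starRingEnd ℂ) (ψ u) * φ u = (Ψᴴ * Φ).trace :=
      (trace_conj_mul ψ φ).symm
    rw [hsum, hfid, show T.trace.re ^ 2 = T.trace.re * T.trace.re from pow_two _]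
    exact hcs
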